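/- In a down-left graph G = G(m,n,a,b) with a_i + 1 < b_i for all i and a_i + 1 < b_{i-1} for 2 ≤ i ≤ m, let i be the largest index with a_i = 0 and suppose i > 1 and b_{i-1} > 2. Then the vertex x = x_{i,1} satisfies N[x_{i-1,2}] ⊆ N[x], and consequently for any induced matching M of G \ N[x], the set M ∪ {{x, x_{i-1,2}}} is an induced matching of G; hence im(G \ N[x]) + 1 ≤ im(G). -/

import Mathlib

/-- The graph `G(m,n)`: vertices are pairs `(i,j)` (0-indexed, corresponding to
`x_{i+1,j+1}`), and `x_{i,j} ~ x_{k,l}` iff (`i < k` and `j > l`) or (`i > k` and `j < l`). -/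
def gridGraph (m n : ℕ) : SimpleGraph (Fin m × Fin n) where
  Adj u v := (u.1 < v.1 ∧ v.2 < u.2) ∨ (v.1 < u.1 ∧ u.2 < v.2)
  symm := ⟨fun u v h => Or.symm h⟩
  loopless := ⟨fun u h => by rcases h with ⟨h, -⟩ | ⟨h, -⟩ <;> exact absurd h (lt_irrefl _)⟩

/-- `M` is an induced matching of the induced subgraph of `G` on `A`:
a set of pairwise disjoint edges of `G` with all endpoints in `A`, such that the only
adjacencies among the endpoints are the edges of `M` themselves. -/
def IsInducedMatchingOn {V : Type*} (G : SimpleGraph V) (A : Set V) (M : Set (Sym2 V)) :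
    Prop :=
  (∀ e ∈ M, ∀ v ∈ e, v ∈ A) ∧
  (∀ e ∈ M, ∃ u v, G.Adj u v ∧ e = s(u, v)) ∧
  (∀ e ∈ M, ∀ f ∈ M, e ≠ f → ∀ v ∈ e, v ∉ f) ∧
  (∀ u v : V, (∃ e ∈ M, u ∈ e) → (∃ e ∈ M, v ∈ e) → G.Adj u v → s(u, v) ∈ M)

/- Down-left graph setup (1-indexed data, 0-indexed vertices): `a`, `b` encode the
vectors `(a_1,…,a_m)`, `(b_1,…,b_m)` with `0 = a_1 ≤ … ≤ a_m < n`,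
`1 < b_1 ≤ … ≤ b_m = n + 1`, `a_i < b_i` for `2 ≤ i ≤ m - 1`.  The down-left graph
`G(m,n,a,b)` is the induced subgraph of `G(m,n)` on the vertex set `A`, where the
vertex `x_{i,j}` (i.e. the pair `(i-1, j-1) : Fin m × Fin n`) is kept iff
`a_i < j < b_i`. -/
/-- in a down-left graph with `a_i + 1 < b_i` for all `i` and
`a_i + 1 < b_{i-1}` for `2 ≤ i ≤ m`, let `i` be the largest index with `a_i = 0`,
and suppose `i > 1` and `b_{i-1} > 2`.  Let `x = x_{i,1}` and `y = x_{i-1,2}`.  Then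
`N[y] ⊆ N[x]` (within the graph), every induced matching `M` of `G \ N[x]` yields the
induced matching `M ∪ {{x,y}}` of `G`, and hence `im(G \ N[x]) + 1 ≤ im(G)`. -/
theorem stmt11 (m n : ℕ) (hm : 1 ≤ m) (hmn : m ≤ n)
    (a b : ℕ → ℕ)
    (ha1 : a 1 = 0)
    (hamono : ∀ i, 1 ≤ i → i < m → a i ≤ a (i + 1))
    (ham : a m < n)
    (hb1 : 1 < b 1)
    (hbmono : ∀ i, 1 ≤ i → i < m → b i ≤ b (i + 1))
    (hbm : b m = n + 1)
    (hab : ∀ i, 2 ≤ i → i ≤ m - 1 → a i < b i)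
    (A : Set (Fin m × Fin n))
    (hA : A = {p : Fin m × Fin n |
      a (p.1.1 + 1) < p.2.1 + 1 ∧ p.2.1 + 1 < b (p.1.1 + 1)})
    (hab1 : ∀ i, 1 ≤ i → i ≤ m → a i + 1 < b i)
    (hab2 : ∀ i, 2 ≤ i → i ≤ m → a i + 1 < b (i - 1))
    (i : ℕ) (hi1 : 1 ≤ i) (him : i ≤ m) (hai : a i = 0)
    (hlargest : ∀ k, i < k → k ≤ m → a k ≠ 0)
    (hi2 : 1 < i) (hbi : 2 < b (i - 1))
    (x y : Fin m × Fin n)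
    (hx : x.1.1 = i - 1 ∧ x.2.1 = 0)
    (hy : y.1.1 = i - 2 ∧ y.2.1 = 1)
    (Nx : Set (Fin m × Fin n))
    (hNx : Nx = {x} ∪ {v | (gridGraph m n).Adj x v}) :
    (∀ v ∈ A, (v = y ∨ (gridGraph m n).Adj y v) → (v = x ∨ (gridGraph m n).Adj x v)) ∧
    (∀ M : Set (Sym2 (Fin m × Fin n)),
      IsInducedMatchingOn (gridGraph m n) (A \ Nx) M →
      IsInducedMatchingOn (gridGraph m n) A (insert s(x, y) M)) ∧
    (∀ k : ℕ,
      (∃ M : Set (Sym2 (Fin m × Fin n)),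
        IsInducedMatchingOn (gridGraph m n) (A \ Nx) M ∧ M.ncard = k) →
      ∃ M' : Set (Sym2 (Fin m × Fin n)),
        IsInducedMatchingOn (gridGraph m n) A M' ∧ M'.ncard = k + 1) := by
  obtain ⟨hx1, hx2⟩ := hx
  obtain ⟨hy1, hy2⟩ := hy
  have hxm : x.1.1 < m := x.1.2
  have hym : y.1.1 < m := y.1.2
  have hxi : x.1.1 + 1 = i := by omega
  have hyi : y.1.1 + 1 = i - 1 := by omega
  have hxA : x ∈ A := by
    rw [hA]
    refine ⟨by rw [hxi, hai]; omega, ?_⟩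
    rw [hxi, hx2]
    have := hab1 i hi1 him
    omega
  have hai1 : a (i - 1) = 0 := by
    have := hamono (i - 1) (by omega) (by omega)
    rw [show i - 1 + 1 = i by omega] at this
    omega
  have hyA : y ∈ A := by
    rw [hA]
    exact ⟨by rw [hyi, hai1, hy2]; omega, by rw [hyi, hy2]; exact hbi⟩
  have hadj : (gridGraph m n).Adj x y := by
    right
    exact ⟨Fin.lt_def.mpr (by omega), Fin.lt_def.mpr (by omega)⟩
  have key : ∀ v ∈ A, (v = y ∨ (gridGraph m n).Adj y v) →
      (v = x ∨ (gridGraph m n).Adj x v) := by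
    intro v hvA hv
    rcases hv with rfl | hadjyv
    · exact Or.inr hadj
    · rcases hadjyv with ⟨h1, h2⟩ | ⟨h1, h2⟩
      · left
        have h1' : y.1.1 < v.1.1 := h1
        have h2' : v.2.1 < y.2.1 := h2
        have hvm : v.1.1 < m := v.1.2
        have hv1 : v.1.1 ≤ i - 1 := by
          by_contra h
          have hne := hlargest (v.1.1 + 1) (by omega) (by omega)
          rw [hA] at hvA
          have := hvA.1
          omega
        have : v.1 = x.1 := Fin.ext (by omega)
        have : v.2 = x.2 := Fin.ext (by omega)
        exact Prod.ext ‹v.1 = x.1› ‹v.2 = x.2›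
      · right
        right
        have h1' : v.1.1 < y.1.1 := h1
        have h2' : y.2.1 < v.2.1 := h2
        exact ⟨Fin.lt_def.mpr (by omega), Fin.lt_def.mpr (by omega)⟩
  have hxNx : x ∈ Nx := by rw [hNx]; exact Or.inl rfl
  have hyNx : y ∈ Nx := by rw [hNx]; exact Or.inr hadj
  have part2 : ∀ M : Set (Sym2 (Fin m × Fin n)),
      IsInducedMatchingOn (gridGraph m n) (A \ Nx) M →
      IsInducedMatchingOn (gridGraph m n) A (insert s(x, y) M) := by
    rintro M ⟨hM1, hM2, hM3, hM4⟩
    have hMnotx : ∀ e ∈ M, x ∉ e := fun e he hxe => (hM1 e he x hxe).2 hxNx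
    have hMnoty : ∀ e ∈ M, y ∉ e := fun e he hye => (hM1 e he y hye).2 hyNx
    have hnotN : ∀ w, w ∈ A \ Nx → ¬(w = x ∨ (gridGraph m n).Adj x w) := by
      intro w hw h
      apply hw.2
      rw [hNx]
      rcases h with rfl | h
      · exact Or.inl rfl
      · exact Or.inr h
    refine ⟨?_, ?_, ?_, ?_⟩
    · intro e he v hv
      rcases he with rfl | he
      · rcases Sym2.mem_iff.mp hv with rfl | rfl
        · exact hxA
        · exact hyA
      · exact (hM1 e he v hv).1
    · intro e he
      rcases he with rfl | he
      · exact ⟨x, y, hadj, rfl⟩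
      · exact hM2 e he
    · intro e he f hf hef v hv
      rcases he with rfl | he <;> rcases hf with rfl | hf
      · exact absurd rfl hef
      · rcases Sym2.mem_iff.mp hv with rfl | rfl
        · exact hMnotx f hf
        · exact hMnoty f hf
      · intro hvf
        rcases Sym2.mem_iff.mp hvf with rfl | rfl
        · exact hMnotx e he hv
        · exact hMnoty e he hv
      · exact hM3 e he f hf hef v hv
    · intro u v hu hv huv
      obtain ⟨e, he, hue⟩ := hu
      obtain ⟨f, hf, hvf⟩ := hv
      rcases he with rfl | heM <;> rcases hf with rfl | hfM
      · left
        rcases Sym2.mem_iff.mp hue with rfl | rfl <;>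
          rcases Sym2.mem_iff.mp hvf with rfl | rfl
        · exact absurd huv (gridGraph m n).irrefl
        · rfl
        · exact Sym2.eq_swap
        · exact absurd huv (gridGraph m n).irrefl
      · exfalso
        have hvAN : v ∈ A \ Nx := hM1 f hfM v hvf
        rcases Sym2.mem_iff.mp hue with rfl | rfl
        · exact hnotN v hvAN (Or.inr huv)
        · exact hnotN v hvAN (key v hvAN.1 (Or.inr huv))
      · exfalso
        have huAN : u ∈ A \ Nx := hM1 e heM u hue
        rcases Sym2.mem_iff.mp hvf with rfl | rfl
        · exact hnotN u huAN (Or.inr huv.symm)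
        · exact hnotN u huAN (key u huAN.1 (Or.inr huv.symm))
      · exact Or.inr (hM4 u v ⟨e, heM, hue⟩ ⟨f, hfM, hvf⟩ huv)
  refine ⟨key, part2, ?_⟩
  rintro k ⟨M, hM, hcard⟩
  refine ⟨insert s(x, y) M, part2 M hM, ?_⟩
  have hnotmem : s(x, y) ∉ M := fun hmem =>
    (hM.1 s(x, y) hmem x (Sym2.mem_mk_left x y)).2 hxNx
  rw [Set.ncard_insert_of_notMem hnotmem M.toFinite, hcard]
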